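/- Let n ≥ 2 and m ≥ 2 be natural numbers, let ℓ, r : Fin n → ℤ take values only in {1, -1}, and suppose that for every i : Fin n with i + 1 < n we have r i = -ℓ (i+1), and additionally r (n-1) = -ℓ 0 (cyclic vertex compatibility). Let e : Fin m → Fin n be a strictly monotone map whose range is exactly the set of non-alternating indices {i : Fin n | ℓ i = r i}. Then for every k : Fin m with k + 1 < m one has ℓ (e (k+1)) = -ℓ (e k), and moreover ℓ (e 0) = -ℓ (e (m-1)); that is, listing the non-alternating edges of the boundary of a region in cyclic order, the signs alternate all the way around, including between the last and the first. -/

import Mathlib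

/-- If no index in `[a, b)` is non-alternating, then `ℓ` is constant on `[a,b]`. -/
lemma ell_const_on_alt (n : ℕ) (ℓ r : Fin n → ℤ)
    (hℓ : ∀ i : Fin n, ℓ i ∈ ({1, -1} : Set ℤ))
    (hr : ∀ i : Fin n, r i ∈ ({1, -1} : Set ℤ))
    (hcomp : ∀ i : Fin n, (h : (i : ℕ) + 1 < n) → r i = -ℓ ⟨(i : ℕ) + 1, h⟩)
    (a b : ℕ) (hab : a ≤ b) (hb : b < n)
    (halt : ∀ i : Fin n, a ≤ (i : ℕ) → (i : ℕ) < b → ℓ i ≠ r i) :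
    ℓ ⟨a, lt_of_le_of_lt hab hb⟩ = ℓ ⟨b, hb⟩ := by
  induction b, hab using Nat.le_induction with
  | base => rfl
  | succ b hab ih =>
    have hb' : b < n := by omega
    have h1 : ℓ ⟨a, lt_of_le_of_lt hab hb'⟩ = ℓ ⟨b, hb'⟩ :=
      ih hb' (fun i hi hi' => halt i hi (by omega))
    have hne : ℓ ⟨b, hb'⟩ ≠ r ⟨b, hb'⟩ :=
      halt ⟨b, hb'⟩ (by show a ≤ b; omega) (by show b < b + 1; omega)
    have hc : r ⟨b, hb'⟩ = -ℓ ⟨b + 1, hb⟩ := hcomp ⟨b, hb'⟩ hb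
    have h2 := hℓ ⟨b, hb'⟩
    have h3 := hr ⟨b, hb'⟩
    have h4 : ℓ ⟨b, hb'⟩ = -r ⟨b, hb'⟩ := by
      rcases h2 with h2 | (h2 : _ = _) <;> rcases h3 with h3 | (h3 : _ = _) <;>
        omega
    rw [h1, h4, hc, neg_neg]

/-- Listing the non-alternating edges of the boundary of a region in cyclic
order, the signs alternate all the way around, including between the last and
the first. -/
theorem signs_alternate_cyclically
    (n m : ℕ) (hn : 2 ≤ n) (hm : 2 ≤ m)
    (ℓ r : Fin n → ℤ)
    (hℓ : ∀ i : Fin n, ℓ i ∈ ({1, -1} : Set ℤ))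
    (hr : ∀ i : Fin n, r i ∈ ({1, -1} : Set ℤ))
    (hcomp : ∀ i : Fin n, (h : (i : ℕ) + 1 < n) → r i = -ℓ ⟨(i : ℕ) + 1, h⟩)
    (hcyc : r ⟨n - 1, by omega⟩ = -ℓ ⟨0, by omega⟩)
    (e : Fin m → Fin n) (hmono : StrictMono e)
    (hrange : Set.range e = {i : Fin n | ℓ i = r i}) :
    (∀ k : Fin m, (hk : (k : ℕ) + 1 < m) → ℓ (e ⟨(k : ℕ) + 1, hk⟩) = -ℓ (e k)) ∧
      ℓ (e ⟨0, by omega⟩) = -ℓ (e ⟨m - 1, by omega⟩) := by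
  -- small named proofs, to avoid the huge `omega` proof terms from the
  -- signature appearing in later definitional-equality checks
  have h1n : n - 1 < n := Nat.sub_lt (by omega) Nat.one_pos
  have h0n : 0 < n := by omega
  have h0m : 0 < m := by omega
  have h1m : m - 1 < m := Nat.sub_lt (by omega) Nat.one_pos
  have hcyc' : r ⟨n - 1, h1n⟩ = -ℓ ⟨0, h0n⟩ := hcyc
  clear hcyc
  -- every e k is non-alternating
  have hna : ∀ k : Fin m, ℓ (e k) = r (e k) := by
    intro k
    have : e k ∈ Set.range e := ⟨k, rfl⟩
    rw [hrange] at this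
    exact this
  -- indices not in range are alternating
  have hnotrange : ∀ i : Fin n, i ∉ Set.range e → ℓ i ≠ r i := by
    intro i hi hcon
    exact hi (by rw [hrange]; exact hcon)
  constructor
  · intro k hk
    set a := e k with ha
    set b := e ⟨(k : ℕ) + 1, hk⟩ with hb
    have hab : a < b := hmono (by simp [Fin.lt_def])
    have ha1 : (a : ℕ) + 1 < n := by
      have := b.isLt
      omega
    have step : ℓ ⟨(a : ℕ) + 1, ha1⟩ = -ℓ a := by
      have hc := hcomp a ha1
      have h := hna k
      rw [← ha] at h
      rw [h, hc, neg_neg]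
    have hbetween : ∀ i : Fin n, (a : ℕ) + 1 ≤ (i : ℕ) → (i : ℕ) < (b : ℕ) → ℓ i ≠ r i := by
      intro i hi1 hi2
      apply hnotrange
      rintro ⟨k', rfl⟩
      have h1 : a < e k' := by rw [Fin.lt_def]; omega
      have h2 : e k' < b := by rw [Fin.lt_def]; omega
      have h1' : k < k' := hmono.lt_iff_lt.mp h1
      have h2' : (k' : ℕ) < (k : ℕ) + 1 := by
        have := hmono.lt_iff_lt.mp h2
        simpa [Fin.lt_def] using this
      omega
    have hab1 : (a : ℕ) + 1 ≤ (b : ℕ) := hab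
    have hconst := ell_const_on_alt n ℓ r hℓ hr hcomp ((a : ℕ) + 1) (b : ℕ)
      hab1 b.isLt hbetween
    simp only [Fin.eta] at hconst
    rw [← hconst]
    rw [show (⟨(a : ℕ) + 1, lt_of_le_of_lt hab1 b.isLt⟩ : Fin n) = ⟨(a : ℕ) + 1, ha1⟩ from rfl]
    exact step
  · show ℓ (e ⟨0, h0m⟩) = -ℓ (e ⟨m - 1, h1m⟩)
    set a := e ⟨m - 1, h1m⟩ with ha
    have hna' : ℓ a = r a := hna _
    -- everything above a is alternating
    have habove : ∀ i : Fin n, (a : ℕ) < (i : ℕ) → ℓ i ≠ r i := by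
      intro i hi
      apply hnotrange
      rintro ⟨k', rfl⟩
      have : e k' ≤ a := hmono.monotone (by
        rw [Fin.le_def]; simp; omega)
      rw [Fin.le_def] at this
      omega
    -- ℓ 0 = -ℓ a
    have h0 : ℓ ⟨0, h0n⟩ = -ℓ a := by
      by_cases hlast : (a : ℕ) = n - 1
      · have heq : a = ⟨n - 1, h1n⟩ := Fin.ext hlast
        rw [heq] at hna'
        rw [heq, hna', hcyc']
        exact (neg_neg _).symm
      · have ha1 : (a : ℕ) + 1 < n := by
          have := a.isLt; omega
        have step : ℓ ⟨(a : ℕ) + 1, ha1⟩ = -ℓ a := by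
          rw [hcomp a ha1] at hna'
          omega
        have hle : (a : ℕ) + 1 ≤ n - 1 := by
          have := a.isLt; omega
        have hconst := ell_const_on_alt n ℓ r hℓ hr hcomp ((a : ℕ) + 1) (n - 1)
          hle h1n (fun i hi1 _ => habove i (by omega))
        have hne : ℓ ⟨n - 1, h1n⟩ ≠ r ⟨n - 1, h1n⟩ :=
          habove ⟨n - 1, h1n⟩ (by show (a : ℕ) < n - 1; omega)
        have h2 := hℓ (⟨n - 1, h1n⟩ : Fin n)
        have h3 := hr (⟨n - 1, h1n⟩ : Fin n)
        have h4 : ℓ (⟨n - 1, h1n⟩ : Fin n) = -r (⟨n - 1, h1n⟩ : Fin n) := by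
          rcases h2 with h2 | (h2 : _ = _) <;> rcases h3 with h3 | (h3 : _ = _) <;>
            omega
        rw [hcyc'] at h4
        rw [← hconst] at h4
        rw [show (⟨(a : ℕ) + 1, lt_of_le_of_lt hle h1n⟩ : Fin n) = ⟨(a : ℕ) + 1, ha1⟩
          from rfl] at h4
        rw [step] at h4
        omega
    -- everything below e 0 is alternating, so ℓ (e 0) = ℓ 0
    have hbelow : ∀ i : Fin n, (i : ℕ) < (e ⟨0, h0m⟩ : ℕ) → ℓ i ≠ r i := by
      intro i hi
      apply hnotrange
      rintro ⟨k', rfl⟩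
      have : e ⟨0, h0m⟩ ≤ e k' := hmono.monotone (by
        rw [Fin.le_def]; simp)
      rw [Fin.le_def] at this
      omega
    have hconst0 := ell_const_on_alt n ℓ r hℓ hr hcomp 0 (e ⟨0, h0m⟩ : ℕ)
      (Nat.zero_le _) (e ⟨0, h0m⟩).isLt (fun i _ hi => hbelow i hi)
    simp only [Fin.eta] at hconst0
    rw [← hconst0]
    rw [show (⟨0, lt_of_le_of_lt (Nat.zero_le _) (e ⟨0, h0m⟩).isLt⟩ : Fin n) = ⟨0, h0n⟩
      from rfl]
    exact h0
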